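/- Let X, Y be nonempty finite sets, P̲ a coherent strongly factorising lower prevision on gambles on X × Y, x ∈ X, and h a gamble on X × Y. Then for every μ ∈ ℝ: P̲(1_{{x}×Y}·(h − μ)) = P̲({x}×Y)·(P̲(h(x,·)) − μ) if P̲(h(x,·)) ≥ μ, and P̲(1_{{x}×Y}·(h − μ)) = P̄({x}×Y)·(P̲(h(x,·)) − μ) if P̲(h(x,·)) ≤ μ. -/

import Mathlib

theorem stmt_11 {X Y : Type*} [Fintype X] [Nonempty X] [Fintype Y] [Nonempty Y]
    (P : (X × Y → ℝ) → ℝ)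
    (h1 : ∀ f : X × Y → ℝ, P f ≥ Finset.univ.inf' Finset.univ_nonempty f)
    (h2 : ∀ f g : X × Y → ℝ, P (f + g) ≥ P f + P g)
    (h3 : ∀ (f : X × Y → ℝ) (l : ℝ), 0 ≤ l → P (l • f) = l * P f)
    (hfact : ∀ (f : X → ℝ) (g : Y → ℝ), (∀ x, 0 ≤ f x) →
      P (fun p => f p.1 * g p.2) = P (fun p => f p.1 * P (fun q => g q.2)))
    (x : X) (h : X × Y → ℝ) :
    ∀ μ : ℝ,
      (P (fun p : X × Y => h (x, p.2)) ≥ μ →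
        P (fun p => ({x} : Set X).indicator (1 : X → ℝ) p.1 * (h p - μ))
          = P (fun p : X × Y => ({x} : Set X).indicator (1 : X → ℝ) p.1)
            * (P (fun p : X × Y => h (x, p.2)) - μ)) ∧
      (P (fun p : X × Y => h (x, p.2)) ≤ μ →
        P (fun p => ({x} : Set X).indicator (1 : X → ℝ) p.1 * (h p - μ))
          = (-P (fun p : X × Y => -(({x} : Set X).indicator (1 : X → ℝ) p.1)))
            * (P (fun p : X × Y => h (x, p.2)) - μ)) := by
  have hP0 : P 0 = 0 := by
    have := h3 0 0 le_rfl
    simpa using this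
  have hge : ∀ c : ℝ, P (fun _ => c) ≥ c := by
    intro c
    have := h1 (fun _ => c)
    simpa using this
  have hconst : ∀ c : ℝ, P (fun _ => c) = c := by
    intro c
    refine le_antisymm ?_ (hge c)
    have h2' := h2 (fun _ => c) (fun _ => -c)
    have he : ((fun _ => c) + (fun _ => -c) : X × Y → ℝ) = 0 := by
      funext p; simp
    rw [he, hP0] at h2'
    have := hge (-c)
    linarith
  have htrans : ∀ (f : X × Y → ℝ) (c : ℝ), P (fun p => f p + c) = P f + c := by
    intro f c
    refine le_antisymm ?_ ?_
    · have h2' := h2 (fun p => f p + c) (fun _ => -c)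
      have he : ((fun p => f p + c) + (fun _ => -c) : X × Y → ℝ) = f := by
        funext p; simp
      rw [he] at h2'
      have := hconst (-c)
      rw [this] at h2'
      linarith
    · have h2' := h2 f (fun _ => c)
      have he : (f + (fun _ => c) : X × Y → ℝ) = fun p => f p + c := by
        funext p; simp
      rw [he, hconst] at h2'
      linarith
  intro μ
  set I : X → ℝ := fun a => ({x} : Set X).indicator (1 : X → ℝ) a with hI
  have hInn : ∀ a, 0 ≤ I a := fun a =>
    Set.indicator_nonneg (fun _ _ => zero_le_one) a
  have key : (fun p : X × Y => I p.1 * (h p - μ))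
      = fun p : X × Y => I p.1 * ((fun y => h (x, y) - μ) p.2) := by
    funext p
    by_cases hp : p.1 = x
    · have hpe : p = (x, p.2) := by rw [← hp]
      rw [hpe]
    · have hz : I p.1 = 0 := Set.indicator_of_notMem (by simpa using hp) _
      simp [hz]
  set D : ℝ := P (fun p : X × Y => h (x, p.2)) - μ with hD
  have hinner : P (fun q : X × Y => (fun y => h (x, y) - μ) q.2) = D := by
    have := htrans (fun p : X × Y => h (x, p.2)) (-μ)
    simpa [sub_eq_add_neg, hD] using this
  have hmain : P (fun p : X × Y => I p.1 * (h p - μ)) = P (fun p : X × Y => I p.1 * D) := by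
    rw [key, hfact I (fun y => h (x, y) - μ) hInn, hinner]
  constructor
  · intro hge'
    have hD0 : 0 ≤ D := by simp [hD]; linarith
    have hsm : (fun p : X × Y => I p.1 * D) = D • (fun p : X × Y => I p.1) := by
      funext p; simp [mul_comm]
    rw [hmain, hsm, h3 _ D hD0, mul_comm]
  · intro hle'
    have hD0 : 0 ≤ -D := by simp [hD]; linarith
    have hsm : (fun p : X × Y => I p.1 * D) = (-D) • (fun p : X × Y => -(I p.1)) := by
      funext p; simp; ring
    rw [hmain, hsm, h3 _ (-D) hD0]
    ring
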